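/- Suppose the GFT is left separable (each f_l ∈ F₁ has the form f_l(x,u) = |f_l(x,u)|·i_l(u) with i_l independent of x) and A(x) = C·B(x) for a constant multivector C. Then ℱ_{F₁,F₂}(A)(u) = Σ_{j∈{0,1}^μ} C_{c^j(F₁)}(u) · ℱ_{F₁(j),F₂}(B)(u), where F₁(j) replaces each f_l by (−1)^{j_l}·f_l and C_{c^j(F₁)}(u) is the iterated (anti)commutative decomposition of C with respect to the values i_l(u). -/

import Mathlib

open MeasureTheory

/-- The integrand of the general geometric Fourier transform. -/
noncomputable def gftIntegrand {𝒢 : Type*} [NormedRing 𝒢] [NormedAlgebra ℝ 𝒢]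
    [CompleteSpace 𝒢] {m μ κ : ℕ}
    (f1 : Fin μ → (Fin m → ℝ) → (Fin m → ℝ) → 𝒢)
    (f2 : Fin κ → (Fin m → ℝ) → (Fin m → ℝ) → 𝒢)
    (A : (Fin m → ℝ) → 𝒢) (u x : Fin m → ℝ) : 𝒢 :=
  (List.ofFn fun l => NormedSpace.exp (-(f1 l x u))).prod * A x *
    (List.ofFn fun l => NormedSpace.exp (-(f2 l x u))).prod

/-- The general geometric Fourier transform `ℱ_{F₁,F₂}(A)(u)`. -/
noncomputable def gft {𝒢 : Type*} [NormedRing 𝒢] [NormedAlgebra ℝ 𝒢]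
    [CompleteSpace 𝒢] {m μ κ : ℕ}
    (f1 : Fin μ → (Fin m → ℝ) → (Fin m → ℝ) → 𝒢)
    (f2 : Fin κ → (Fin m → ℝ) → (Fin m → ℝ) → 𝒢)
    (A : (Fin m → ℝ) → 𝒢) (u : Fin m → ℝ) : 𝒢 :=
  ∫ x, gftIntegrand f1 f2 A u x

/-- Commuting/anticommuting projections with respect to an element `i` with inverse `iinv`:
`c⁰(C) = ½(C + i⁻¹Ci)`, `c¹(C) = ½(C − i⁻¹Ci)`. -/
noncomputable def cProjInv {𝒢 : Type*} [Ring 𝒢] [Algebra ℝ 𝒢]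
    (b : Bool) (iinv i C : 𝒢) : 𝒢 :=
  if b then (2⁻¹ : ℝ) • (C - iinv * C * i) else (2⁻¹ : ℝ) • (C + iinv * C * i)

section Aux

variable {𝒢 : Type*} [NormedRing 𝒢] [NormedAlgebra ℝ 𝒢] [CompleteSpace 𝒢]

lemma mul_exp_of_anticomm {a b : 𝒢} (h : b * a = -(a * b)) :
    b * NormedSpace.exp a = NormedSpace.exp (-a) * b := by
  have hpow : ∀ n : ℕ, b * a ^ n = (-a) ^ n * b := by
    intro n
    induction n with
    | zero => simp
    | succ n ih =>
      calc b * a ^ (n + 1) = b * a * a ^ n := by rw [pow_succ', mul_assoc]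
        _ = -(a * (b * a ^ n)) := by rw [h, neg_mul, mul_assoc]
        _ = -(a * ((-a) ^ n * b)) := by rw [ih]
        _ = (-a) ^ (n + 1) * b := by rw [pow_succ', mul_assoc, neg_mul]
  simp only [NormedSpace.exp_eq_tsum ℝ]
  rw [← (NormedSpace.expSeries_summable' (𝕂 := ℝ) a).tsum_mul_left b,
    ← (NormedSpace.expSeries_summable' (𝕂 := ℝ) (-a)).tsum_mul_right b]
  exact tsum_congr fun n => by rw [mul_smul_comm, hpow, smul_mul_assoc]

lemma exp_mul_split (i : 𝒢) (r : ℝ) (hr : 0 < r) (hi : i * i = algebraMap ℝ 𝒢 (-r))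
    (s : ℝ) (D : 𝒢) :
    NormedSpace.exp (-(s • i)) * D =
      cProjInv false (r⁻¹ • (-i)) i D * NormedSpace.exp (-(s • i)) +
        cProjInv true (r⁻¹ • (-i)) i D * NormedSpace.exp (s • i) := by
  set iinv : 𝒢 := r⁻¹ • (-i) with hiinv
  have halg : algebraMap ℝ 𝒢 (-r) = (-r) • (1 : 𝒢) := Algebra.algebraMap_eq_smul_one _
  have hXi : iinv * D * i * i = i * D := by
    rw [mul_assoc, hi, halg, mul_smul_comm, mul_one, hiinv, smul_mul_assoc, neg_mul, smul_neg]
    simp [smul_smul, mul_inv_cancel₀ hr.ne']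
  have hiX : i * (iinv * D * i) = D * i := by
    have hii : i * iinv = 1 := by
      rw [hiinv, mul_smul_comm, mul_neg, hi, halg]
      simp [smul_smul, inv_mul_cancel₀ hr.ne']
    rw [← mul_assoc, ← mul_assoc, hii, one_mul]
  have hc0 : cProjInv false iinv i D * i = i * cProjInv false iinv i D := by
    simp only [cProjInv, if_false, Bool.false_eq_true, smul_mul_assoc, mul_smul_comm,
      add_mul, mul_add, hXi, hiX]
    rw [add_comm]
  have hc1 : cProjInv true iinv i D * i = -(i * cProjInv true iinv i D) := by
    simp only [cProjInv, if_true, smul_mul_assoc, mul_smul_comm, sub_mul, mul_sub, hXi, hiX]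
    rw [← smul_neg, neg_sub]
  have hcomm : NormedSpace.exp (-(s • i)) * cProjInv false iinv i D =
      cProjInv false iinv i D * NormedSpace.exp (-(s • i)) := by
    have : Commute (-(s • i)) (cProjInv false iinv i D) := by
      unfold Commute SemiconjBy
      rw [neg_mul, mul_neg, mul_smul_comm, smul_mul_assoc, hc0]
    exact this.exp_left.eq
  have hanti : NormedSpace.exp (-(s • i)) * cProjInv true iinv i D =
      cProjInv true iinv i D * NormedSpace.exp (s • i) := by
    have h : cProjInv true iinv i D * (s • i) = -((s • i) * cProjInv true iinv i D) := by
      rw [mul_smul_comm, smul_mul_assoc, hc1, smul_neg]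
    rw [mul_exp_of_anticomm h]
  have hsum : cProjInv false iinv i D + cProjInv true iinv i D = D := by
    simp only [cProjInv, if_true, if_false, Bool.false_eq_true]
    module
  calc NormedSpace.exp (-(s • i)) * D
      = NormedSpace.exp (-(s • i)) * cProjInv false iinv i D +
          NormedSpace.exp (-(s • i)) * cProjInv true iinv i D := by
        rw [← mul_add, hsum]
    _ = _ := by rw [hcomm, hanti]


lemma prod_exp_mul_split :
    ∀ (n : ℕ) (a i : Fin n → 𝒢) (r s : Fin n → ℝ), (∀ l, 0 < r l) →
      (∀ l, i l * i l = algebraMap ℝ 𝒢 (-(r l))) → (∀ l, a l = s l • i l) → ∀ C : 𝒢,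
      (List.ofFn fun l => NormedSpace.exp (-(a l))).prod * C =
        ∑ j : Fin n → Bool,
          ((List.finRange n).foldr
              (fun l acc => cProjInv (j l) ((r l)⁻¹ • (-(i l))) (i l) acc) C) *
            (List.ofFn fun l =>
              NormedSpace.exp (-((if j l then (-1 : ℝ) else 1) • a l))).prod := by
  intro n
  induction n with
  | zero =>
    intro a i r s hr hi ha C
    simp
  | succ n ih =>
    intro a i r s hr hi ha C
    have key := exp_mul_split (i 0) (r 0) (hr 0) (hi 0) (s 0)
    have hswap : ∀ F : ((Fin (n + 1) → Bool) → 𝒢),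
        (∑ j : Fin (n + 1) → Bool, F j) =
          ∑ b : Bool, ∑ j' : Fin n → Bool, F (Fin.cons b j') := by
      intro F
      rw [← (Fin.consEquiv fun _ => Bool).sum_comp F, Fintype.sum_prod_type]
      rfl
    rw [hswap, Fintype.sum_bool, ← Finset.sum_add_distrib]
    rw [List.ofFn_succ, List.prod_cons, mul_assoc,
      ih (fun l => a l.succ) (fun l => i l.succ) (fun l => r l.succ) (fun l => s l.succ)
        (fun l => hr l.succ) (fun l => hi l.succ) (fun l => ha l.succ) C,
      Finset.mul_sum]
    refine Finset.sum_congr rfl fun j' _ => ?_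
    simp only [List.finRange_succ, List.foldr_cons, List.foldr_map, Fin.cons_zero,
      Fin.cons_succ, List.ofFn_succ, List.prod_cons]
    set Cj : 𝒢 := (List.finRange n).foldr
      (fun l acc => cProjInv (j' l) ((r l.succ)⁻¹ • (-(i l.succ))) (i l.succ) acc) C with hCj
    set P : 𝒢 := (List.ofFn fun l =>
      NormedSpace.exp (-((if j' l then (-1 : ℝ) else 1) • a l.succ))).prod with hP
    rw [ha 0, ← mul_assoc, key Cj]
    simp only [if_true, if_false, Bool.false_eq_true, one_smul, neg_smul, neg_neg]
    noncomm_ring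

end Aux


/-- Left products theorem for a left separable GFT: if each `f_l ∈ F₁` has the form
`f_l(x,u) = |f_l(x,u)|·i_l(u)` and `A(x) = C·B(x)`, then
`ℱ_{F₁,F₂}(A)(u) = Σ_{j∈{0,1}^μ} C_{c^j(←F₁)}(u) · ℱ_{F₁(j),F₂}(B)(u)`,
where `F₁(j)` replaces `f_l` by `(−1)^{j_l} f_l` and the projections on `C` are applied in
reversed order (first with respect to `i_μ(u)`). -/
theorem gft_left_products {𝒢 : Type*} [NormedRing 𝒢] [NormedAlgebra ℝ 𝒢] [CompleteSpace 𝒢]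
    {m μ κ : ℕ}
    (f1 : Fin μ → (Fin m → ℝ) → (Fin m → ℝ) → 𝒢)
    (f2 : Fin κ → (Fin m → ℝ) → (Fin m → ℝ) → 𝒢)
    (s : Fin μ → (Fin m → ℝ) → (Fin m → ℝ) → ℝ)
    (i : Fin μ → (Fin m → ℝ) → 𝒢) (r : Fin μ → (Fin m → ℝ) → ℝ)
    (hsep : ∀ l x u, f1 l x u = s l x u • i l u)
    (hr : ∀ l u, 0 < r l u)
    (hi : ∀ l u, i l u * i l u = algebraMap ℝ 𝒢 (-(r l u)))
    (hf2 : ∀ l x u, ∃ ρ : ℝ, 0 < ρ ∧ f2 l x u * f2 l x u = algebraMap ℝ 𝒢 (-ρ))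
    (C : 𝒢) (A B : (Fin m → ℝ) → 𝒢) (hA : ∀ x, A x = C * B x) (u : Fin m → ℝ)
    (hInt : ∀ j : Fin μ → Bool,
      Integrable (gftIntegrand
        (fun l x u => (if j l then (-1 : ℝ) else 1) • f1 l x u) f2 B u)) :
    gft f1 f2 A u =
      ∑ j : Fin μ → Bool,
        (((List.finRange μ).reverse).foldl
            (fun acc l => cProjInv (j l) ((r l u)⁻¹ • (-(i l u))) (i l u) acc) C) *
          gft (fun l x u => (if j l then (-1 : ℝ) else 1) • f1 l x u) f2 B u := by
  have hfold : ∀ j : Fin μ → Bool,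
      ((List.finRange μ).reverse).foldl
          (fun acc l => cProjInv (j l) ((r l u)⁻¹ • (-(i l u))) (i l u) acc) C =
        (List.finRange μ).foldr
          (fun l acc => cProjInv (j l) ((r l u)⁻¹ • (-(i l u))) (i l u) acc) C := fun j =>
    List.foldl_reverse
  have hpt : ∀ x, gftIntegrand f1 f2 A u x =
      ∑ j : Fin μ → Bool,
        ((List.finRange μ).foldr
            (fun l acc => cProjInv (j l) ((r l u)⁻¹ • (-(i l u))) (i l u) acc) C) *
          gftIntegrand (fun l x u => (if j l then (-1 : ℝ) else 1) • f1 l x u) f2 B u x := by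
    intro x
    unfold gftIntegrand
    rw [hA x, ← mul_assoc,
      prod_exp_mul_split μ (fun l => f1 l x u) (fun l => i l u) (fun l => r l u)
        (fun l => s l x u) (fun l => hr l u) (fun l => hi l u) (fun l => hsep l x u) C,
      Finset.sum_mul, Finset.sum_mul]
    exact Finset.sum_congr rfl fun j _ => by simp only [mul_assoc]
  calc gft f1 f2 A u
      = ∫ x, ∑ j : Fin μ → Bool,
          ((List.finRange μ).foldr
              (fun l acc => cProjInv (j l) ((r l u)⁻¹ • (-(i l u))) (i l u) acc) C) *
            gftIntegrand (fun l x u => (if j l then (-1 : ℝ) else 1) • f1 l x u) f2 B u x := by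
        unfold gft; simp only [hpt]
    _ = ∑ j : Fin μ → Bool,
          ∫ x, ((List.finRange μ).foldr
              (fun l acc => cProjInv (j l) ((r l u)⁻¹ • (-(i l u))) (i l u) acc) C) *
            gftIntegrand (fun l x u => (if j l then (-1 : ℝ) else 1) • f1 l x u) f2 B u x :=
        integral_finset_sum _ fun j _ => (hInt j).const_mul _
    _ = _ := by
        refine Finset.sum_congr rfl fun j _ => ?_
        rw [hfold j]
        unfold gft
        exact (ContinuousLinearMap.mul ℝ 𝒢
          (((List.finRange μ).foldr
            (fun l acc => cProjInv (j l) ((r l u)⁻¹ • (-(i l u))) (i l u) acc) C))).integral_comp_comm (hInt j)
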